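/- arXiv:2602.05039 — 2 statements merged into one kernel-verified Lean document; each statement's English description precedes it below -/
import Mathlib

section
/- Let K be a field, A a finitely generated K-algebra with finite generating set S containing 1, d ∈ ℕ, and φ : A → M_n(K) a d-approximation of (A,S). Let W ≤ A_{≤d} be a nontrivial linear subspace. Then there exist W-root vectors v_1, …, v_ℓ ∈ K^n for φ such that the subspaces φ(W)v_1, …, φ(W)v_ℓ are linearly independent (their sum is direct) and dim(⊕_{i=1}^ℓ φ(W)v_i) ≥ (1 − 2/d)·n − dim W. -/
open Filter

/-- The set of products of at most `r` elements of `S` (monomials of length `≤ r`). -/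
def monomials {A : Type*} [Monoid A] (S : Set A) (r : ℕ) : Set A :=
  {a | ∃ l : List A, l.length ≤ r ∧ (∀ x ∈ l, x ∈ S) ∧ l.prod = a}

/-- `A_{≤ r}`: the `K`-linear span of the monomials of length at most `r` in `S`. -/
def ballSpan (K : Type*) {A : Type*} [Field K] [Ring A] [Algebra K A]
    (S : Set A) (r : ℕ) : Submodule K A :=
  Submodule.span K (monomials S r)

/-- The normalized rank `rk(X) = rank(X)/n` of an `n × n` matrix. -/
noncomputable def nrk {K : Type*} [Field K] {n : ℕ} (X : Matrix (Fin n) (Fin n) K) : ℝ :=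
  (X.rank : ℝ) / n

/-- `φ : A → M_n(K)` is a `d`-approximation of `(A, S)`. -/
def IsDApprox (K : Type*) {A : Type*} [Field K] [Ring A] [Algebra K A]
    (S : Set A) (d n : ℕ) (φ : A →ₗ[K] Matrix (Fin n) (Fin n) K) : Prop :=
  (∃ U : Submodule K (Fin n → K),
    ((1 : ℝ) - 1 / d) * n ≤ Module.finrank K U ∧
    ∀ x ∈ ballSpan K S d, ∀ y ∈ ballSpan K S d, ∀ u ∈ U,
      (φ (x * y)).mulVec u = (φ x).mulVec ((φ y).mulVec u)) ∧
  (∀ a ∈ ballSpan K S d, a ≠ 0 → (1 : ℝ) - 1 / d ≤ nrk (φ a))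

/-- A sequence of linear maps `φ_k : A → M_{n_k}(K)` is a linear sofic approximation if for
every `d` it is eventually a `d`-approximation. -/
def IsLinearSoficApprox (K : Type*) {A : Type*} [Field K] [Ring A] [Algebra K A]
    (S : Set A) (n : ℕ → ℕ) (φ : ∀ k, A →ₗ[K] Matrix (Fin (n k)) (Fin (n k)) K) : Prop :=
  ∀ d : ℕ, ∀ᶠ k in atTop, IsDApprox K S d (n k) (φ k)

/-- `A` is an amenable `K`-algebra: there is an exhausting increasing sequence of
finite-dimensional subspaces which is a Følner sequence. -/
def IsAmenableAlgebra (K A : Type*) [Field K] [Ring A] [Algebra K A] : Prop :=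
  ∃ W : ℕ → Submodule K A, Monotone W ∧ (∀ i, FiniteDimensional K (W i)) ∧
    (⨆ i, W i) = ⊤ ∧
    ∀ V : Submodule K A, FiniteDimensional K V →
      Tendsto (fun i => (Module.finrank K ↥(V * W i) : ℝ) / Module.finrank K (W i))
        atTop (nhds 1)

/-- The linear map `a ↦ φ(a) v`. -/
def evalVec {K : Type*} [Field K] {A : Type*} [Ring A] [Algebra K A] {n : ℕ}
    (φ : A →ₗ[K] Matrix (Fin n) (Fin n) K) (v : Fin n → K) : A →ₗ[K] (Fin n → K) where
  toFun a := (φ a).mulVec v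
  map_add' a b := by simp [Matrix.add_mulVec]
  map_smul' c a := by simp [Matrix.smul_mulVec]

/-- `v` is a `W`-root vector for `φ`: `w ↦ φ(w) v` is injective on `W` and
`φ(xy)v = φ(x)(φ(y)v)` for all `x, y ∈ W`. -/
def IsRootVector {K : Type*} [Field K] {A : Type*} [Ring A] [Algebra K A] {n : ℕ}
    (φ : A →ₗ[K] Matrix (Fin n) (Fin n) K) (W : Submodule K A) (v : Fin n → K) : Prop :=
  Set.InjOn (fun a => (φ a).mulVec v) (W : Set A) ∧
  ∀ x ∈ W, ∀ y ∈ W, (φ (x * y)).mulVec v = (φ x).mulVec ((φ y).mulVec v)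

/-- `A` is weakly stable (w.r.t. the generating set `S`). -/
def WeaklyStable (K : Type*) {A : Type*} [Field K] [Ring A] [Algebra K A] (S : Set A) : Prop :=
  ∀ ε : ℝ, 0 < ε → ∃ d : ℕ, ∀ n : ℕ, ∀ φ : A →ₗ[K] Matrix (Fin n) (Fin n) K,
    IsDApprox K S d n φ →
      ∃ ψ : A →ₗ[K] Matrix (Fin n) (Fin n) K,
        (∀ a b : A, ψ (a * b) = ψ a * ψ b) ∧ ∀ s ∈ S, nrk (φ s - ψ s) < ε


section AuxiliaryLemmas

open Module Submodule



/-- Supremum of a `Fin.snoc` family. -/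
theorem iSup_snoc {α : Type*} [CompleteLattice α] {ℓ : ℕ} (f : Fin ℓ → α) (N : α) :
    (⨆ i, (Fin.snoc f N : Fin (ℓ+1) → α) i) = (⨆ i, f i) ⊔ N := by
  apply le_antisymm
  · apply iSup_le
    intro i
    refine Fin.lastCases ?_ ?_ i
    · rw [Fin.snoc_last]; exact le_sup_right
    · intro j; rw [Fin.snoc_castSucc]; exact le_sup_of_le_left (le_iSup f j)
  · apply sup_le
    · refine iSup_le fun i => ?_
      exact le_iSup_of_le i.castSucc (by rw [Fin.snoc_castSucc])
    · exact le_iSup_of_le (Fin.last ℓ) (by rw [Fin.snoc_last])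

/-- Extending an independent family by an element disjoint from its supremum. -/
theorem iSupIndep_snoc {α : Type*} [CompleteLattice α] [IsModularLattice α] {ℓ : ℕ}
    {f : Fin ℓ → α} {N : α} (hf : iSupIndep f) (hN : Disjoint N (⨆ i, f i)) :
    iSupIndep (Fin.snoc f N : Fin (ℓ+1) → α) := by
  intro i
  refine Fin.lastCases ?_ ?_ i
  · have h1 : (⨆ (j) (_ : j ≠ Fin.last ℓ), (Fin.snoc f N : Fin (ℓ+1) → α) j) ≤ ⨆ i, f i := by
      refine iSup₂_le fun j hj => ?_
      obtain ⟨j0, rfl⟩ := Fin.exists_castSucc_eq.mpr hj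
      rw [Fin.snoc_castSucc]; exact le_iSup f j0
    rw [Fin.snoc_last]
    exact hN.mono_right h1
  · intro i0
    have h2 : (⨆ (j) (_ : j ≠ Fin.castSucc i0), (Fin.snoc f N : Fin (ℓ+1) → α) j)
        ≤ (⨆ (j) (_ : j ≠ i0), f j) ⊔ N := by
      refine iSup₂_le fun j hj => ?_
      rcases eq_or_ne j (Fin.last ℓ) with rfl | hjl
      · rw [Fin.snoc_last]; exact le_sup_right
      · obtain ⟨j0, rfl⟩ := Fin.exists_castSucc_eq.mpr hjl
        rw [Fin.snoc_castSucc]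
        refine le_sup_of_le_left (le_iSup₂ (f := fun (j : Fin ℓ) (_ : j ≠ i0) => f j) j0 ?_)
        exact fun h => hj (congrArg Fin.castSucc h)
    have h3 : Disjoint ((f i0) ⊔ (⨆ (j) (_ : j ≠ i0), f j)) N := by
      refine hN.symm.mono_left ?_
      exact sup_le (le_iSup f i0) (iSup₂_le fun j _ => le_iSup f j)
    have h4 : Disjoint (f i0) ((⨆ (j) (_ : j ≠ i0), f j) ⊔ N) :=
      (hf i0).disjoint_sup_right_of_disjoint_sup_left h3
    rw [Fin.snoc_castSucc]
    exact h4.mono_right h2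



theorem aux_finite (K M : Type*) [Field K] [Finite K] [AddCommGroup M] [Module K M]
    [FiniteDimensional K M] : Finite M :=
  Finite.of_equiv _ (Module.finBasis K M).equivFun.toEquiv.symm

theorem core_finite {K : Type*} [Field K] [Finite K] {U W Q : Type*} [AddCommGroup U] [Module K U]
    [AddCommGroup W] [Module K W] [AddCommGroup Q] [Module K Q]
    [FiniteDimensional K U] [FiniteDimensional K W]
    (B : U →ₗ[K] W →ₗ[K] Q)
    (h : ∀ w : W, w ≠ 0 →
      finrank K (LinearMap.ker (B.flip w)) + finrank K W < finrank K U) :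
    ∃ v : U, ∀ w : W, w ≠ 0 → B v w ≠ 0 := by
  classical
  by_contra hc
  push_neg at hc
  choose f hf0 hfB using hc
  haveI : Fintype K := Fintype.ofFinite K
  haveI : Finite U := aux_finite K U
  haveI : Finite W := aux_finite K W
  haveI : Fintype U := Fintype.ofFinite U
  haveI : Fintype W := Fintype.ofFinite W
  set q := Fintype.card K with hq
  set u := finrank K U with hu
  set m := finrank K W with hm
  have hq1 : 1 < q := Fintype.one_lt_card
  have hum : m + 1 ≤ u := by have := h (f 0) (hf0 0); omega
  have hcardU : Fintype.card U = q ^ u := card_eq_pow_finrank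
  have key : (Finset.univ : Finset U).card
      = ∑ w ∈ Finset.univ.erase (0 : W), (Finset.univ.filter (fun v : U => f v = w)).card :=
    Finset.card_eq_sum_card_fiberwise
      (fun v _ => Finset.mem_erase.mpr ⟨hf0 v, Finset.mem_univ _⟩)
  have hfiber : ∀ w : W, w ≠ 0 →
      (Finset.univ.filter (fun v : U => f v = w)).card ≤ q ^ (u - m - 1) := by
    intro w hw
    have hsub : (Finset.univ.filter (fun v : U => f v = w))
        ⊆ Finset.univ.filter (fun v : U => B v w = 0) := by
      intro v hv
      rw [Finset.mem_filter] at hv ⊢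
      exact ⟨hv.1, by rw [← hv.2]; exact hfB v⟩
    have h1 : (Finset.univ.filter (fun v : U => B v w = 0)).card
        = Nat.card {v : U // B v w = 0} := by
      rw [Nat.card_eq_fintype_card, Fintype.card_subtype]
    have h2 : Nat.card {v : U // B v w = 0} = Nat.card (LinearMap.ker (B.flip w)) :=
      Nat.card_congr (Equiv.subtypeEquivRight (fun v => by simp [LinearMap.mem_ker]))
    have h3 : Nat.card (LinearMap.ker (B.flip w)) = q ^ finrank K (LinearMap.ker (B.flip w)) := by
      haveI : Fintype (LinearMap.ker (B.flip w)) := Fintype.ofFinite _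
      rw [Nat.card_eq_fintype_card, card_eq_pow_finrank (K := K)]
    have h4 : finrank K (LinearMap.ker (B.flip w)) ≤ u - m - 1 := by
      have := h w hw; omega
    calc (Finset.univ.filter (fun v : U => f v = w)).card
        ≤ (Finset.univ.filter (fun v : U => B v w = 0)).card := Finset.card_le_card hsub
      _ = q ^ finrank K (LinearMap.ker (B.flip w)) := by rw [h1, h2, h3]
      _ ≤ q ^ (u - m - 1) := Nat.pow_le_pow_right (by omega) h4
  have hcard_erase : (Finset.univ.erase (0 : W)).card = q ^ m - 1 := by
    rw [Finset.card_erase_of_mem (Finset.mem_univ _), Finset.card_univ,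
      card_eq_pow_finrank (K := K)]
  have htot : q ^ u ≤ (q ^ m - 1) * q ^ (u - m - 1) := by
    calc q ^ u = (Finset.univ : Finset U).card := by rw [Finset.card_univ, hcardU]
      _ = ∑ w ∈ Finset.univ.erase (0 : W), (Finset.univ.filter (fun v : U => f v = w)).card := key
      _ ≤ ∑ _w ∈ Finset.univ.erase (0 : W), q ^ (u - m - 1) :=
          Finset.sum_le_sum (fun w hw => hfiber w (Finset.mem_erase.mp hw).1)
      _ = (q ^ m - 1) * q ^ (u - m - 1) := by
          rw [Finset.sum_const, hcard_erase, smul_eq_mul]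
  have hpos : 0 < q ^ (u - m - 1) := pow_pos (by omega) _
  have h5 : q ^ m - 1 < q ^ m := Nat.sub_lt (pow_pos (by omega) _) one_pos
  have h6 : (q ^ m - 1) * q ^ (u - m - 1) < q ^ m * q ^ (u - m - 1) :=
    mul_lt_mul_of_pos_right h5 hpos
  have h7 : q ^ m * q ^ (u - m - 1) = q ^ (u - 1) := by
    rw [← pow_add]; congr 1; omega
  have h8 : q ^ (u - 1) < q ^ u := Nat.pow_lt_pow_right hq1 (by omega)
  omega


theorem core_infinite {K : Type*} [Field K] [Infinite K] {U W Q : Type*}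
    [AddCommGroup U] [Module K U]
    [AddCommGroup W] [Module K W] [AddCommGroup Q] [Module K Q]
    [FiniteDimensional K U] [FiniteDimensional K W] [FiniteDimensional K Q]
    (B : U →ₗ[K] W →ₗ[K] Q)
    (h : ∀ w : W, w ≠ 0 →
      finrank K (LinearMap.ker (B.flip w)) + finrank K W < finrank K U) :
    ∃ v : U, ∀ w : W, w ≠ 0 → B v w ≠ 0 := by
  classical
  have hrank : ∀ w : W, w ≠ 0 → finrank K W < finrank K (LinearMap.range (B.flip w)) := by
    intro w hw
    have h1 := LinearMap.finrank_range_add_finrank_ker (B.flip w)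
    have h2 := h w hw
    omega
  obtain ⟨v₀, hv₀⟩ : ∃ v₀ : U, ∀ v : U,
      finrank K (LinearMap.range (B v)) ≤ finrank K (LinearMap.range (B v₀)) := by
    have hne : (Set.range fun v : U => finrank K (LinearMap.range (B v))).Nonempty :=
      ⟨_, ⟨0, rfl⟩⟩
    have hbdd : BddAbove (Set.range fun v : U => finrank K (LinearMap.range (B v))) :=
      ⟨finrank K W, by rintro x ⟨v, rfl⟩; exact LinearMap.finrank_range_le _⟩
    obtain ⟨v₀, hv₀⟩ := Nat.sSup_mem hne hbdd
    exact ⟨v₀, fun v => le_of_le_of_eq (le_csSup hbdd ⟨v, rfl⟩) hv₀.symm⟩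
  set r := finrank K (LinearMap.range (B v₀)) with hrdef
  by_cases hker : LinearMap.ker (B v₀) = ⊥
  · refine ⟨v₀, fun w hw hBw => hw ?_⟩
    have hmem : w ∈ LinearMap.ker (B v₀) := hBw
    rwa [hker, Submodule.mem_bot] at hmem
  · exfalso
    obtain ⟨n₀, hn₀mem, hn₀ne⟩ := (Submodule.ne_bot_iff _).mp hker
    have hBn₀ : B v₀ n₀ = 0 := hn₀mem
    -- Claim: for every v, B v n₀ ∈ range (B v₀).
    have hclaim : ∀ v : U, B v n₀ ∈ LinearMap.range (B v₀) := by
      intro v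
      by_contra hq
      set R := LinearMap.range (B v₀) with hR
      let bR : Basis (Fin r) K R := Module.finBasisOfFinrankEq K R hrdef.symm
      choose wv hwv using fun i : Fin r => LinearMap.mem_range.mp (bR i).2
      set q0 := B v n₀ with hq0
      set H0 : Fin (r+1) → Q := Fin.cons q0 (fun i => (bR i : Q)) with hH0
      have hspan : Submodule.span K (Set.range fun i : Fin r => (bR i : Q)) = R := by
        have he : (Set.range fun i : Fin r => (bR i : Q)) = R.subtype '' Set.range ⇑bR := by
          rw [← Set.range_comp]; rfl
        rw [he, Submodule.span_image, bR.span_eq, Submodule.map_top, Submodule.range_subtype]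
      have hH0ind : LinearIndependent K H0 := by
        refine linearIndependent_fin_cons.mpr ⟨?_, ?_⟩
        · exact bR.linearIndependent.map' R.subtype (Submodule.ker_subtype R)
        · rw [hspan]; exact hq
      -- a coordinate system adapted to H0
      set P0 := Submodule.span K (Set.range H0) with hP0
      obtain ⟨Cc, hCc⟩ := Submodule.exists_isCompl P0
      let bP : Basis (Fin (r+1)) K P0 := Basis.span hH0ind
      let pr : Q →ₗ[K] P0 := P0.linearProjOfIsCompl Cc hCc
      let Xi : Q →ₗ[K] (Fin (r+1) → K) := LinearMap.pi (fun i => (bP.coord i) ∘ₗ pr)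
      have hXi : ∀ j i, Xi (H0 j) i = if j = i then 1 else 0 := by
        intro j i
        have hmem : H0 j ∈ P0 := Submodule.subset_span (Set.mem_range_self j)
        have h1 : pr (H0 j) = ⟨H0 j, hmem⟩ :=
          Submodule.linearProjOfIsCompl_apply_left hCc ⟨H0 j, hmem⟩
        have h2 : (⟨H0 j, hmem⟩ : P0) = bP j := by
          apply Subtype.ext
          rw [Basis.span_apply]
        simp only [Xi, LinearMap.pi_apply, LinearMap.comp_apply, h1, h2, Basis.coord_apply,
          Basis.repr_self, Finsupp.single_apply]
      -- derivative family
      set D : Fin (r+1) → Q := Fin.cons 0 (fun i => B v (wv i)) with hD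
      -- polynomial matrix
      set PM : Matrix (Fin (r+1)) (Fin (r+1)) (Polynomial K) :=
        Matrix.of fun i j => Polynomial.C (Xi (H0 j) i) + Polynomial.X * Polynomial.C (Xi (D j) i)
        with hPM
      have hPMeval : ∀ t : K, PM.map (Polynomial.eval t)
          = Matrix.of fun i j => Xi (H0 j) i + t * Xi (D j) i := by
        intro t
        ext i j
        simp [hPM, Matrix.map_apply]
        ring
      have hdet0 : Polynomial.eval 0 PM.det = 1 := by
        have h1 : (Polynomial.evalRingHom (0:K)) PM.det = (PM.map ⇑(Polynomial.evalRingHom 0)).det :=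
          RingHom.map_det _ _
        rw [Polynomial.coe_evalRingHom] at h1
        rw [h1, hPMeval]
        have h2 : (Matrix.of fun i j => Xi (H0 j) i + (0:K) * Xi (D j) i)
            = (1 : Matrix (Fin (r+1)) (Fin (r+1)) K) := by
          ext i j
          rw [Matrix.of_apply, Matrix.one_apply, hXi j i]
          by_cases hij : i = j <;> simp [hij, eq_comm]
        rw [h2, Matrix.det_one]
      have hpne : PM.det * Polynomial.X ≠ 0 := by
        intro h0
        rcases mul_eq_zero.mp h0 with h1 | h1
        · rw [h1] at hdet0; simp at hdet0
        · exact Polynomial.X_ne_zero h1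
      obtain ⟨t, hpt⟩ : ∃ t : K, Polynomial.eval t (PM.det * Polynomial.X) ≠ 0 := by
        by_contra hall
        push_neg at hall
        apply hpne
        apply Polynomial.eq_zero_of_infinite_isRoot
        have : {x : K | (PM.det * Polynomial.X).IsRoot x} = Set.univ :=
          Set.eq_univ_of_forall hall
        rw [this]
        exact Set.infinite_univ
      rw [Polynomial.eval_mul, Polynomial.eval_X] at hpt
      have htne : t ≠ 0 := fun h0 => hpt (by rw [h0, mul_zero])
      have hdet_t : Polynomial.eval t PM.det ≠ 0 := fun h0 => hpt (by rw [h0, zero_mul])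
      -- the matrix at t
      set Nmat : Matrix (Fin (r+1)) (Fin (r+1)) K :=
        Matrix.of fun i j => Xi (H0 j) i + t * Xi (D j) i with hNmat
      have hNdet : Nmat.det ≠ 0 := by
        have h2 : (Polynomial.evalRingHom t) PM.det = (PM.map ⇑(Polynomial.evalRingHom t)).det :=
          RingHom.map_det _ _
        rw [Polynomial.coe_evalRingHom] at h2
        rw [hNmat, ← hPMeval t, ← h2]
        exact hdet_t
      set dv : Fin (r+1) → K := fun j => if j = 0 then t else 1 with hdv
      set Mt : Matrix (Fin (r+1)) (Fin (r+1)) K := Nmat * Matrix.diagonal dv with hMt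
      have hMtdet : Mt.det ≠ 0 := by
        rw [hMt, Matrix.det_mul, Matrix.det_diagonal]
        have hprod : (∏ i, dv i) = t := by
          rw [hdv]
          simp [Finset.prod_ite_eq']
        rw [hprod]
        exact mul_ne_zero hNdet htne
      -- the G family
      set wfam : Fin (r+1) → W := Fin.cons n₀ wv with hwfam
      set G : Fin (r+1) → Q := fun j => B (v₀ + t • v) (wfam j) with hGdef
      have hGcol : ∀ j i, Xi (G j) i = Mt i j := by
        intro j
        refine Fin.cases ?_ ?_ j
        · -- j = 0
          intro i
          have hG0 : G 0 = t • q0 := by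
            rw [hGdef]
            simp only [hwfam, Fin.cons_zero, map_add, map_smul, LinearMap.add_apply,
              LinearMap.smul_apply]
            rw [hBn₀, zero_add, hq0]
          have hD0 : D 0 = 0 := by rw [hD]; simp
          have hH00 : H0 0 = q0 := by rw [hH0]; simp
          rw [hG0, hMt, Matrix.mul_diagonal, map_smul]
          simp [hNmat, hdv, hD0, hH00, mul_comm]
        · -- j = succ i0
          intro i0 i
          have h2 : H0 i0.succ = (bR i0 : Q) := by rw [hH0]; simp
          have h3 : D i0.succ = B v (wv i0) := by rw [hD]; simp
          have hGs : G i0.succ = H0 i0.succ + t • D i0.succ := by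
            rw [hGdef]
            simp only [hwfam, Fin.cons_succ, map_add, map_smul, LinearMap.add_apply,
              LinearMap.smul_apply]
            rw [hwv i0, h2, h3]
          have hdvs : dv i0.succ = (1:K) := by rw [hdv]; simp [Fin.succ_ne_zero]
          rw [hGs, hMt, Matrix.mul_diagonal, hdvs, mul_one, map_add, map_smul]
          simp [hNmat]
      have hGind : LinearIndependent K G := by
        have hXiG : LinearIndependent K (⇑Xi ∘ G) := by
          rw [Fintype.linearIndependent_iff]
          intro g hg j
          have hmv : Mt.mulVec g = 0 := by
            funext i
            have hgi := congrFun hg i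
            simp only [Finset.sum_apply, Function.comp_apply, Pi.smul_apply, smul_eq_mul,
              Pi.zero_apply] at hgi
            rw [Matrix.mulVec]
            simp only [dotProduct, Pi.zero_apply]
            rw [← hgi]
            apply Finset.sum_congr rfl
            intro j' _
            rw [hGcol j' i, mul_comm]
          have hg0 : g = 0 := Matrix.eq_zero_of_mulVec_eq_zero hMtdet hmv
          rw [hg0]
          rfl
        exact LinearIndependent.of_comp Xi hXiG
      -- contradiction with maximality
      have hle : r + 1 ≤ finrank K (LinearMap.range (B (v₀ + t • v))) := by
        let gsub : Fin (r+1) → LinearMap.range (B (v₀ + t • v)) :=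
          fun j => ⟨G j, LinearMap.mem_range.mpr ⟨wfam j, rfl⟩⟩
        have hgsub : LinearIndependent K gsub := by
          apply LinearIndependent.of_comp (LinearMap.range (B (v₀ + t • v))).subtype
          exact hGind
        simpa using hgsub.fintype_card_le_finrank
      have := hv₀ (v₀ + t • v)
      omega
    have hsub : LinearMap.range (B.flip n₀) ≤ LinearMap.range (B v₀) := by
      rintro x ⟨v, rfl⟩
      exact hclaim v
    have h2 : finrank K (LinearMap.range (B.flip n₀)) ≤ r := Submodule.finrank_mono hsub
    have h3 := hrank n₀ hn₀ne
    have h4 : r ≤ finrank K W := LinearMap.finrank_range_le _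
    omega

theorem core_exists {K : Type*} [Field K] {U W Q : Type*}
    [AddCommGroup U] [Module K U]
    [AddCommGroup W] [Module K W] [AddCommGroup Q] [Module K Q]
    [FiniteDimensional K U] [FiniteDimensional K W] [FiniteDimensional K Q]
    (B : U →ₗ[K] W →ₗ[K] Q)
    (h : ∀ w : W, w ≠ 0 →
      finrank K (LinearMap.ker (B.flip w)) + finrank K W < finrank K U) :
    ∃ v : U, ∀ w : W, w ≠ 0 → B v w ≠ 0 := by
  cases finite_or_infinite K with
  | inl hK => exact core_finite B h
  | inr hK => exact core_infinite B h

theorem monomials_finite {A : Type*} [Monoid A] (S : Finset A) (r : ℕ) :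
    (monomials (S : Set A) r).Finite := by
  classical
  induction r with
  | zero =>
    apply Set.Finite.subset (Set.finite_singleton (1 : A))
    rintro a ⟨l, hl, hS, rfl⟩
    have : l = [] := List.length_eq_zero_iff.mp (Nat.le_zero.mp hl)
    simp [this]
  | succ r ih =>
    have hsub : monomials (S : Set A) (r + 1) ⊆
        (monomials (S : Set A) r) ∪
          ⋃ x ∈ (S : Set A), (fun y => x * y) '' (monomials (S : Set A) r) := by
      rintro a ⟨l, hl, hS, rfl⟩
      cases l with
      | nil => exact Or.inl ⟨[], by simp⟩
      | cons x l' =>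
        right
        refine Set.mem_biUnion (hS x (by simp)) ⟨l'.prod, ⟨l', ?_, ?_, rfl⟩, by simp⟩
        · simpa using hl
        · exact fun y hy => hS y (List.mem_cons_of_mem _ hy)
    exact Set.Finite.subset
      (ih.union (Set.Finite.biUnion S.finite_toSet (fun x _ => ih.image _))) hsub


theorem ext_step {K : Type*} [Field K] {A : Type*} [Ring A] [Algebra K A]
    {n d : ℕ} {φ : A →ₗ[K] Matrix (Fin n) (Fin n) K} {S : Finset A}
    (hφ2 : ∀ a ∈ ballSpan K (S : Set A) d, a ≠ 0 → (1 : ℝ) - 1 / d ≤ nrk (φ a))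
    {W : Submodule K A} [FiniteDimensional K W]
    (hWle : W ≤ ballSpan K (S : Set A) d)
    (hn : 0 < n)
    {U : Submodule K (Fin n → K)}
    (hUdim : ((1 : ℝ) - 1 / d) * n ≤ Module.finrank K U)
    (V : Submodule K (Fin n → K))
    (hV : (Module.finrank K V : ℝ) < (1 - 2 / d) * n - Module.finrank K W) :
    ∃ v : Fin n → K, v ∈ U ∧ ∀ w ∈ W, w ≠ 0 → (φ w).mulVec v ∉ V := by
  classical
  set m := Module.finrank K ↥W with hm
  let Bf : ↥U →ₗ[K] ↥W →ₗ[K] ((Fin n → K) ⧸ V) :=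
    { toFun := fun u => V.mkQ ∘ₗ (evalVec φ (u : Fin n → K)) ∘ₗ W.subtype
      map_add' := by
        intro u u'
        ext w
        simp [evalVec, Matrix.mulVec_add]
      map_smul' := by
        intro c u
        ext w
        simp [evalVec, Matrix.mulVec_smul] }
  have hcore : ∀ w : ↥W, w ≠ 0 →
      finrank K (LinearMap.ker (Bf.flip w)) + finrank K ↥W < finrank K ↥U := by
    intro w hw
    have hw0 : (w : A) ≠ 0 := fun h0 => hw (by exact Subtype.ext h0)
    have hwball : (w : A) ∈ ballSpan K (S : Set A) d := hWle w.2
    have hn' : (0 : ℝ) < n := by exact_mod_cast hn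
    have hnrk := hφ2 w hwball hw0
    have hrk : (n : ℝ) - (n : ℝ) / (d : ℝ) ≤ ((φ (w : A)).rank : ℝ) := by
      have h2 : ((1 : ℝ) - 1 / d) * n ≤ ((φ (w : A)).rank : ℝ) := by
        rw [nrk] at hnrk
        exact (le_div_iff₀ hn').mp hnrk
      calc (n : ℝ) - (n : ℝ) / (d : ℝ) = (1 - 1 / d) * n := by ring
        _ ≤ _ := h2
    set killer : (Fin n → K) →ₗ[K] ((Fin n → K) ⧸ V) :=
      V.mkQ ∘ₗ (Matrix.mulVecLin (φ (w : A))) with hkiller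
    have hflip : Bf.flip w = killer ∘ₗ U.subtype := by
      ext u
      simp [Bf, killer, evalVec, Matrix.mulVecLin]
    -- bound finrank of the kernel of Bf.flip w
    have hk1 : finrank K (LinearMap.ker (Bf.flip w)) ≤ finrank K (LinearMap.ker killer) := by
      rw [hflip, LinearMap.ker_comp]
      have e2 : Submodule.comap U.subtype (LinearMap.ker killer)
          = Submodule.comap U.subtype (U ⊓ LinearMap.ker killer) := by
        ext u
        simp [Submodule.mem_comap, u.2]
      rw [e2, (Submodule.comapSubtypeEquivOfLe inf_le_left).finrank_eq]
      exact Submodule.finrank_mono inf_le_right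
    have hrn : finrank K (LinearMap.ker killer) + finrank K (LinearMap.range killer) = n := by
      have h3 := LinearMap.finrank_range_add_finrank_ker killer
      rw [Module.finrank_fin_fun] at h3
      omega
    have hrange : ((φ (w : A)).rank : ℝ) - finrank K V ≤ finrank K (LinearMap.range killer) := by
      set P := LinearMap.range (Matrix.mulVecLin (φ (w : A))) with hP
      have e3 : LinearMap.range killer = Submodule.map V.mkQ P := by
        rw [hkiller, LinearMap.range_comp]
      have e4 := LinearMap.finrank_range_add_finrank_ker (V.mkQ ∘ₗ P.subtype)
      have e5 : LinearMap.range (V.mkQ ∘ₗ P.subtype) = Submodule.map V.mkQ P := by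
        rw [LinearMap.range_comp, Submodule.range_subtype]
      have e6 : finrank K (LinearMap.ker (V.mkQ ∘ₗ P.subtype)) ≤ finrank K V := by
        rw [LinearMap.ker_comp, Submodule.ker_mkQ]
        have e7 : Submodule.comap P.subtype V = Submodule.comap P.subtype (P ⊓ V) := by
          ext x
          simp [Submodule.mem_comap, x.2]
        rw [e7, (Submodule.comapSubtypeEquivOfLe inf_le_left).finrank_eq]
        exact Submodule.finrank_mono inf_le_right
      have e8 : (φ (w : A)).rank = finrank K P := rfl
      rw [e3, e8]
      rw [e5] at e4
      have : (finrank K (Submodule.map V.mkQ P) : ℝ)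
          + finrank K (LinearMap.ker (V.mkQ ∘ₗ P.subtype)) = finrank K P := by
        exact_mod_cast e4
      have e6' : (finrank K (LinearMap.ker (V.mkQ ∘ₗ P.subtype)) : ℝ) ≤ finrank K V := by
        exact_mod_cast e6
      linarith
    -- put the chain together over ℝ
    have hVr : (finrank K V : ℝ) < (n : ℝ) - (n : ℝ) / d - (n : ℝ) / d - m := by
      have : ((1 : ℝ) - 2 / d) * n = (n : ℝ) - (n : ℝ) / d - (n : ℝ) / d := by ring
      rw [this] at hV
      linarith
    have hUr : (n : ℝ) - (n : ℝ) / d ≤ finrank K ↥U := by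
      have : ((1 : ℝ) - 1 / d) * n = (n : ℝ) - (n : ℝ) / d := by ring
      rw [this] at hUdim
      exact hUdim
    have hfinal : (finrank K (LinearMap.ker (Bf.flip w)) : ℝ) + m < finrank K ↥U := by
      have hk1' : (finrank K (LinearMap.ker (Bf.flip w)) : ℝ)
          ≤ finrank K (LinearMap.ker killer) := by exact_mod_cast hk1
      have hrn' : (finrank K (LinearMap.ker killer) : ℝ)
          + finrank K (LinearMap.range killer) = n := by exact_mod_cast hrn
      linarith
    exact_mod_cast hfinal
  obtain ⟨vb, hvb⟩ := core_exists Bf hcore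
  refine ⟨(vb : Fin n → K), vb.2, ?_⟩
  intro w hw hwne hmem
  have hne : (⟨w, hw⟩ : ↥W) ≠ 0 := fun h0 => hwne (by simpa using congrArg Subtype.val h0)
  apply hvb ⟨w, hw⟩ hne
  show V.mkQ ((φ w).mulVec (vb : Fin n → K)) = 0
  rw [Submodule.mkQ_apply, Submodule.Quotient.mk_eq_zero]
  exact hmem

end AuxiliaryLemmas

/-- Lemma (linear monotiling): a `d`-approximation admits `W`-root vectors `v_1, …, v_ℓ` such
that the subspaces `φ(W)v_i` are independent and their direct sum has dimension at least
`(1 - 2/d)·n - dim W`. -/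
theorem linear_monotiling
    {K : Type*} [Field K] {A : Type*} [Ring A] [Algebra K A]
    (S : Finset A) (h1 : (1 : A) ∈ S)
    (hgen : Algebra.adjoin K (S : Set A) = ⊤)
    (d n : ℕ) (φ : A →ₗ[K] Matrix (Fin n) (Fin n) K)
    (hφ : IsDApprox K (S : Set A) d n φ)
    (W : Submodule K A) (hW : W ≤ ballSpan K (S : Set A) d) (hWne : W ≠ ⊥) :
    ∃ (ℓ : ℕ) (v : Fin ℓ → (Fin n → K)),
      (∀ i, IsRootVector φ W (v i)) ∧
      iSupIndep (fun i : Fin ℓ => W.map (evalVec φ (v i))) ∧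
      (1 - 2 / d) * n - Module.finrank K W
        ≤ (Module.finrank K ↥(⨆ i : Fin ℓ, W.map (evalVec φ (v i))) : ℝ) := by
  classical
  haveI hballfd : FiniteDimensional K (ballSpan K (S : Set A) d) :=
    FiniteDimensional.span_of_finite K (monomials_finite S d)
  haveI hWfd : FiniteDimensional K W := Submodule.finiteDimensional_of_le hW
  set m := Module.finrank K ↥W with hmdef
  have hm1 : 1 ≤ m := by
    haveI : Nontrivial ↥W := Submodule.nontrivial_iff_ne_bot.mpr hWne
    exact Module.finrank_pos
  by_cases htriv : (1 - 2 / (d : ℝ)) * n - m ≤ 0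
  · refine ⟨0, Fin.elim0, fun i => i.elim0, fun i => i.elim0, ?_⟩
    rw [iSup_of_empty]
    simpa [finrank_bot] using htriv
  push_neg at htriv
  have hn : 0 < n := by
    rcases Nat.eq_zero_or_pos n with h0 | h0
    · exfalso
      rw [h0] at htriv
      push_cast at htriv
      have : (0 : ℝ) < -m := by linarith
      have : (0 : ℝ) ≤ (m : ℝ) := Nat.cast_nonneg m
      linarith
    · exact h0
  obtain ⟨U, hUdim, hUmul⟩ := hφ.1
  have hφ2 := hφ.2
  have mkRoot : ∀ v : Fin n → K, v ∈ U → (∀ w ∈ W, w ≠ 0 → (φ w).mulVec v ≠ 0)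
      → IsRootVector φ W v := by
    intro v hvU hinj
    constructor
    · intro a ha b hb hab
      by_contra hne
      have hsub : a - b ∈ W := W.sub_mem ha hb
      refine hinj _ hsub (sub_ne_zero.mpr hne) ?_
      simp only at hab
      rw [map_sub, Matrix.sub_mulVec, hab, sub_self]
    · intro x hx y hy
      exact hUmul x (hW hx) y (hW hy) v hvU
  have key : ∀ j : ℕ, ∃ (ℓ : ℕ) (v : Fin ℓ → (Fin n → K)),
      (∀ i, v i ∈ U) ∧ (∀ i, IsRootVector φ W (v i)) ∧
      iSupIndep (fun i : Fin ℓ => W.map (evalVec φ (v i))) ∧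
      ((1 - 2 / (d : ℝ)) * n - m
          ≤ (Module.finrank K ↥(⨆ i : Fin ℓ, W.map (evalVec φ (v i))) : ℝ) ∨
        j ≤ Module.finrank K ↥(⨆ i : Fin ℓ, W.map (evalVec φ (v i)))) := by
    intro j
    induction j with
    | zero =>
      exact ⟨0, Fin.elim0, fun i => i.elim0, fun i => i.elim0, fun i => i.elim0,
        Or.inr (Nat.zero_le _)⟩
    | succ j ih =>
      obtain ⟨ℓ, v, hvU, hvroot, hvind, hvbound⟩ := ih
      set Vcur := ⨆ i : Fin ℓ, W.map (evalVec φ (v i)) with hVcur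
      by_cases hdone : (1 - 2 / (d : ℝ)) * n - m ≤ (Module.finrank K ↥Vcur : ℝ)
      · exact ⟨ℓ, v, hvU, hvroot, hvind, Or.inl hdone⟩
      · push_neg at hdone
        have hjle : j ≤ Module.finrank K ↥Vcur := by
          rcases hvbound with hb | hb
          · exact absurd hb (not_le.mpr hdone)
          · exact hb
        obtain ⟨vn, hvnU, hvn⟩ := ext_step hφ2 hW hn hUdim Vcur hdone
        have hvnne : ∀ w ∈ W, w ≠ 0 → (φ w).mulVec vn ≠ 0 := by
          intro w hw hwne h0
          exact hvn w hw hwne (h0 ▸ Vcur.zero_mem)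
        set Nnew := W.map (evalVec φ vn) with hNnew
        have hdisj : Disjoint Nnew Vcur := by
          rw [Submodule.disjoint_def]
          rintro x ⟨w, hw, rfl⟩ hxV
          by_cases hwz : w = 0
          · rw [hwz]
            simp [evalVec, Matrix.zero_mulVec]
          · exact absurd hxV (hvn w hw hwz)
        have hNrank : Module.finrank K ↥Nnew = m := by
          have hker : LinearMap.ker ((evalVec φ vn) ∘ₗ W.subtype) = ⊥ := by
            rw [eq_bot_iff]
            rintro ⟨a, ha⟩ hx
            have hx' : (φ a).mulVec vn = 0 := hx
            rcases eq_or_ne a 0 with haz | haz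
            · simp [Submodule.mem_bot, haz]
            · exact absurd hx' (hvnne a ha haz)
          have hrange : LinearMap.range ((evalVec φ vn) ∘ₗ W.subtype) = Nnew := by
            rw [LinearMap.range_comp, Submodule.range_subtype]
          have h4 := LinearMap.finrank_range_add_finrank_ker ((evalVec φ vn) ∘ₗ W.subtype)
          rw [hrange, hker, finrank_bot] at h4
          omega
        refine ⟨ℓ + 1, Fin.snoc v vn, ?_, ?_, ?_, ?_⟩
        · intro i
          refine Fin.lastCases ?_ ?_ i
          · rw [Fin.snoc_last]; exact hvnU
          · intro i0; rw [Fin.snoc_castSucc]; exact hvU i0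
        · intro i
          refine Fin.lastCases ?_ ?_ i
          · rw [Fin.snoc_last]; exact mkRoot vn hvnU hvnne
          · intro i0; rw [Fin.snoc_castSucc]; exact hvroot i0
        · have hfam : (fun i : Fin (ℓ+1) => W.map (evalVec φ ((Fin.snoc v vn : Fin (ℓ+1) → (Fin n → K)) i)))
              = Fin.snoc (fun i : Fin ℓ => W.map (evalVec φ (v i))) Nnew := by
            funext i
            refine Fin.lastCases ?_ ?_ i
            · rw [Fin.snoc_last, Fin.snoc_last]
            · intro i0; rw [Fin.snoc_castSucc, Fin.snoc_castSucc]
          rw [hfam]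
          exact iSupIndep_snoc hvind hdisj
        · have hfam : (fun i : Fin (ℓ+1) => W.map (evalVec φ ((Fin.snoc v vn : Fin (ℓ+1) → (Fin n → K)) i)))
              = Fin.snoc (fun i : Fin ℓ => W.map (evalVec φ (v i))) Nnew := by
            funext i
            refine Fin.lastCases ?_ ?_ i
            · rw [Fin.snoc_last, Fin.snoc_last]
            · intro i0; rw [Fin.snoc_castSucc, Fin.snoc_castSucc]
          rw [hfam, iSup_snoc]
          have hsum : Module.finrank K ↥(Vcur ⊔ Nnew) = Module.finrank K ↥Vcur + m := by
            have h5 := Submodule.finrank_sup_add_finrank_inf_eq Vcur Nnew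
            have h6 : Vcur ⊓ Nnew = ⊥ := disjoint_iff.mp hdisj.symm
            rw [h6, finrank_bot] at h5
            omega
          right
          rw [hsum]
          omega
  obtain ⟨ℓ, v, hvU, hvroot, hvind, hvb⟩ := key (n + 1)
  have hle : Module.finrank K ↥(⨆ i : Fin ℓ, W.map (evalVec φ (v i))) ≤ n := by
    have := Submodule.finrank_le (⨆ i : Fin ℓ, W.map (evalVec φ (v i)))
    rwa [Module.finrank_fin_fun] at this
  rcases hvb with hb | hb
  · exact ⟨ℓ, v, hvroot, hvind, hb⟩
  · omega
end

section
/- Let K be a field and A a finite-dimensional K-algebra with no zero divisors, with finite generating set S containing 1. Let n, d ∈ ℕ with d > n and d ≥ dim_K A. If φ, ψ : A → M_n(K) are both d-approximations of (A,S), then φ and ψ are genuine algebra representations and are truly conjugate: there exists M ∈ GL_n(K) with M φ(a) M^{-1} = ψ(a) for every a ∈ A. -/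
open Filter

section BallSpanAux

open Pointwise

variable {K : Type*} [Field K] {A : Type*} [Ring A] [Algebra K A]

lemma monomials_mono' {S : Set A} {r t : ℕ} (h : r ≤ t) : monomials S r ⊆ monomials S t := by
  rintro a ⟨l, hl, hS, rfl⟩; exact ⟨l, hl.trans h, hS, rfl⟩

lemma one_mem_monomials' (S : Set A) (r : ℕ) : (1 : A) ∈ monomials S r :=
  ⟨[], by simp, by simp, by simp⟩

lemma monomials_mul_subset' (S : Set A) (r t : ℕ) :
    monomials S r * monomials S t ⊆ monomials S (r + t) := by
  rintro _ ⟨a, ⟨l, hl, hS, rfl⟩, b, ⟨m, hm, hmS, rfl⟩, rfl⟩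
  refine ⟨l ++ m, by simpa using Nat.add_le_add hl hm, ?_, by simp⟩
  intro x hx
  rcases List.mem_append.1 hx with h | h
  exacts [hS x h, hmS x h]

lemma monomials_succ_subset' (S : Set A) (r : ℕ) :
    monomials S (r + 1) ⊆ monomials S 1 * monomials S r := by
  rintro _ ⟨l, hl, hS, rfl⟩
  cases l with
  | nil => exact ⟨1, one_mem_monomials' S 1, 1, one_mem_monomials' S r, by simp⟩
  | cons x t =>
    refine ⟨x, ⟨[x], by simp, by simp [hS x (by simp)], by simp⟩,
      t.prod, ⟨t, ?_, fun y hy => hS y (List.mem_cons_of_mem _ hy), rfl⟩, by simp⟩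
    simpa using Nat.le_of_succ_le_succ hl

lemma ballSpan_mono' {S : Set A} : Monotone (ballSpan K S) :=
  fun _ _ h => Submodule.span_mono (monomials_mono' h)

lemma ballSpan_mul_le' (S : Set A) (r t : ℕ) :
    ballSpan K S r * ballSpan K S t ≤ ballSpan K S (r + t) := by
  rw [ballSpan, ballSpan, Submodule.span_mul_span]
  exact Submodule.span_le.2 fun a ha => Submodule.subset_span (monomials_mul_subset' S r t ha)

lemma ballSpan_stab' (S : Set A) (r : ℕ) (h : ballSpan K S r = ballSpan K S (r + 1)) :
    ∀ m, ballSpan K S (r + m) = ballSpan K S r := by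
  intro m
  induction m with
  | zero => rfl
  | succ m ih =>
    refine le_antisymm ?_ (ballSpan_mono' (Nat.le_add_right _ _))
    have h1 : ballSpan K S (r + (m + 1)) ≤ ballSpan K S 1 * ballSpan K S (r + m) := by
      show ballSpan K S ((r + m) + 1) ≤ _
      rw [ballSpan, ballSpan, ballSpan, Submodule.span_mul_span]
      exact Submodule.span_le.2 fun a ha =>
        Submodule.subset_span (monomials_succ_subset' S (r + m) ha)
    calc ballSpan K S (r + (m + 1)) ≤ ballSpan K S 1 * ballSpan K S (r + m) := h1
      _ ≤ ballSpan K S 1 * ballSpan K S r := by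
          exact mul_le_mul' (le_refl _) ih.le
      _ ≤ ballSpan K S (1 + r) := ballSpan_mul_le' S 1 r
      _ = ballSpan K S (r + 1) := by rw [Nat.add_comm]
      _ = ballSpan K S r := h.symm

lemma ballSpan_eq_top_of_stab' (S : Set A) (hgen : Algebra.adjoin K S = ⊤) (r : ℕ)
    (h : ballSpan K S r = ballSpan K S (r + 1)) : ballSpan K S r = ⊤ := by
  have h1 : (1 : A) ∈ ballSpan K S r := Submodule.subset_span (one_mem_monomials' S r)
  have hmul : ∀ x y : A, x ∈ ballSpan K S r → y ∈ ballSpan K S r → x * y ∈ ballSpan K S r := by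
    intro x y hx hy
    have := ballSpan_mul_le' S r r (Submodule.mul_mem_mul hx hy)
    have h2 : ballSpan K S (r + r) = ballSpan K S r := ballSpan_stab' S r h r
    rwa [h2] at this
  have hS : S ⊆ ((ballSpan K S r).toSubalgebra h1 hmul : Set A) := by
    intro s hs
    have hsm : s ∈ monomials S (r + 1) := ⟨[s], by simp, by simpa using hs, by simp⟩
    have : s ∈ ballSpan K S (r + 1) := Submodule.subset_span hsm
    rw [← h] at this
    exact this
  have := Algebra.adjoin_le hS
  rw [hgen] at this
  refine le_antisymm le_top fun a _ => ?_
  exact this (Algebra.mem_top : a ∈ (⊤ : Subalgebra K A))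

lemma ballSpan_eq_top' [FiniteDimensional K A] (S : Set A)
    (hgen : Algebra.adjoin K S = ⊤) {d : ℕ} (hd : Module.finrank K A ≤ d) :
    ballSpan K S d = ⊤ := by
  by_contra hne
  have key : ∀ r : ℕ, ballSpan K S r ≠ ⊤ → r + 1 ≤ Module.finrank K ↥(ballSpan K S r) := by
    intro r
    induction r with
    | zero =>
      intro h0
      have h10 : (1 : A) ≠ 0 := by
        intro h
        apply h0
        have hx : ∀ x : A, x = 0 := fun x => by
          calc x = x * 1 := (mul_one x).symm
            _ = x * 0 := by rw [h]
            _ = 0 := mul_zero x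
        exact Submodule.eq_top_iff'.2 fun x => (hx x) ▸ (ballSpan K S 0).zero_mem
      have hm : (1 : A) ∈ ballSpan K S 0 := Submodule.subset_span (one_mem_monomials' S 0)
      have hne1 : (⟨1, hm⟩ : ballSpan K S 0) ≠ 0 := fun hc => h10 (congrArg Subtype.val hc)
      have : Nontrivial ↥(ballSpan K S 0) := nontrivial_of_ne _ _ hne1
      have := Module.finrank_pos_iff (R := K) (M := ↥(ballSpan K S 0)) |>.mpr this
      omega
    | succ r ih =>
      intro hr1
      have hr : ballSpan K S r ≠ ⊤ := fun h =>
        hr1 (le_antisymm le_top (h ▸ ballSpan_mono' (Nat.le_succ r)))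
      have hlt : ballSpan K S r < ballSpan K S (r + 1) := by
        rcases lt_or_eq_of_le (ballSpan_mono' (Nat.le_succ r) :
            ballSpan K S r ≤ ballSpan K S (r + 1)) with h | h
        · exact h
        · exact absurd (ballSpan_eq_top_of_stab' S hgen r h) hr
      have h2 := Submodule.finrank_lt_finrank_of_lt hlt
      have h3 := ih hr
      omega
  have h1 := key d hne
  have h2 : Module.finrank K ↥(ballSpan K S d) ≤ Module.finrank K A :=
    Submodule.finrank_le _
  omega

end BallSpanAux

lemma Matrix.isUnit_of_rank_eq' {K : Type*} [Field K] {n : ℕ} (X : Matrix (Fin n) (Fin n) K)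
    (h : X.rank = n) : IsUnit X := by
  have hrange : LinearMap.range X.mulVecLin = ⊤ := by
    apply Submodule.eq_top_of_finrank_eq
    rw [show Module.finrank K ↥(LinearMap.range X.mulVecLin) = X.rank from rfl, h,
      Module.finrank_fin_fun]
  have hsurj : Function.Surjective X.mulVecLin := LinearMap.range_eq_top.1 hrange
  have hinj : Function.Injective X.mulVecLin := LinearMap.injective_iff_surjective.2 hsurj
  let e := LinearEquiv.ofBijective X.mulVecLin ⟨hinj, hsurj⟩
  let Y := LinearMap.toMatrix' (e.symm : (Fin n → K) →ₗ[K] (Fin n → K))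
  have hXY : X * Y = 1 := by
    apply Matrix.toLin'.injective
    rw [Matrix.toLin'_mul, Matrix.toLin'_one, Matrix.toLin'_toMatrix']
    apply LinearMap.ext
    intro v
    exact e.apply_symm_apply v
  have hYX : Y * X = 1 := by
    apply Matrix.toLin'.injective
    rw [Matrix.toLin'_mul, Matrix.toLin'_one, Matrix.toLin'_toMatrix']
    apply LinearMap.ext
    intro v
    exact e.symm_apply_apply v
  exact ⟨⟨X, Y, hXY, hYX⟩, rfl⟩

/-- Type synonym for `Fin n → K` as an `A`-module via an algebra morphism into matrices. -/
def RepSpace {K : Type*} [Field K] {A : Type*} [Ring A] [Algebra K A] {n : ℕ}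
    (_ρ : A →ₐ[K] Matrix (Fin n) (Fin n) K) : Type _ := Fin n → K

namespace RepSpace

variable {K : Type*} [Field K] {A : Type*} [Ring A] [Algebra K A] {n : ℕ}
  (ρ : A →ₐ[K] Matrix (Fin n) (Fin n) K)

instance : AddCommGroup (RepSpace ρ) := inferInstanceAs (AddCommGroup (Fin n → K))
instance : Module K (RepSpace ρ) := inferInstanceAs (Module K (Fin n → K))
instance : Module.Finite K (RepSpace ρ) := inferInstanceAs (Module.Finite K (Fin n → K))

instance : Module A (RepSpace ρ) where
  smul a v := (ρ a).mulVec v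
  one_smul v := show (ρ 1).mulVec v = v by rw [map_one]; exact Matrix.one_mulVec _
  mul_smul a b v := show (ρ (a * b)).mulVec v = (ρ a).mulVec ((ρ b).mulVec v) by
    rw [map_mul]; exact (Matrix.mulVec_mulVec _ _ _).symm
  smul_add a v w := show (ρ a).mulVec (v + w) = (ρ a).mulVec v + (ρ a).mulVec w by
    exact Matrix.mulVec_add _ _ _
  smul_zero a := show (ρ a).mulVec 0 = 0 by simp
  add_smul a b v := show (ρ (a + b)).mulVec v = (ρ a).mulVec v + (ρ b).mulVec v by
    rw [map_add]; exact Matrix.add_mulVec _ _ _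
  zero_smul v := show (ρ 0).mulVec v = 0 by rw [map_zero]; exact Matrix.zero_mulVec _

lemma smul_def (a : A) (v : RepSpace ρ) : a • v = (ρ a).mulVec v := rfl

instance : IsScalarTower K A (RepSpace ρ) :=
  ⟨fun k a v => show (ρ (k • a)).mulVec v = k • ((ρ a).mulVec v) by
    rw [map_smul]; exact Matrix.smul_mulVec _ _ _⟩

end RepSpace

/-- For a finite-dimensional algebra with no zero divisors, two `d`-approximations in
`M_n(K)` with `d > n` and `d ≥ dim_K A` are genuine representations and are truly conjugate. -/
theorem dApprox_of_finiteDimensional_conjugate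
    {K : Type*} [Field K] {A : Type*} [Ring A] [Algebra K A] [FiniteDimensional K A]
    (S : Finset A) (h1 : (1 : A) ∈ S)
    (hgen : Algebra.adjoin K (S : Set A) = ⊤)
    (hnzd : ∀ a b : A, a * b = 0 → a = 0 ∨ b = 0)
    (n d : ℕ) (hdn : n < d) (hdA : Module.finrank K A ≤ d)
    (φ ψ : A →ₗ[K] Matrix (Fin n) (Fin n) K)
    (hφ : IsDApprox K (S : Set A) d n φ)
    (hψ : IsDApprox K (S : Set A) d n ψ) :
    (∀ a b : A, φ (a * b) = φ a * φ b) ∧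
    (∀ a b : A, ψ (a * b) = ψ a * ψ b) ∧
    ∃ M : (Matrix (Fin n) (Fin n) K)ˣ,
      ∀ a : A,
        (M : Matrix (Fin n) (Fin n) K) * φ a
            * ((M⁻¹ : (Matrix (Fin n) (Fin n) K)ˣ) : Matrix (Fin n) (Fin n) K)
          = ψ a := by
  rcases Nat.eq_zero_or_pos n with rfl | hn
  · haveI : Subsingleton (Matrix (Fin 0) (Fin 0) K) :=
      ⟨fun a b => by ext i j; exact i.elim0⟩
    exact ⟨fun a b => Subsingleton.elim _ _, fun a b => Subsingleton.elim _ _, 1,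
      fun a => Subsingleton.elim _ _⟩
  rcases subsingleton_or_nontrivial A with hA | hA
  · have h0 : ∀ a : A, a = 0 := fun a => Subsingleton.elim a 0
    have hφ0 : ∀ a : A, φ a = 0 := fun a => by rw [h0 a, map_zero]
    have hψ0 : ∀ a : A, ψ a = 0 := fun a => by rw [h0 a, map_zero]
    exact ⟨fun a b => by rw [hφ0, hφ0, hφ0, mul_zero],
      fun a b => by rw [hψ0, hψ0, hψ0, mul_zero], 1,
      fun a => by rw [hφ0, hψ0]; simp⟩
  have hd0 : (0 : ℝ) < d := by
    have : 0 < d := lt_trans hn hdn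
    exact_mod_cast this
  have hball : ballSpan K (S : Set A) d = ⊤ := ballSpan_eq_top' _ hgen hdA
  have hmem : ∀ a : A, a ∈ ballSpan K (S : Set A) d := fun a => by
    rw [hball]; exact Submodule.mem_top
  have main : ∀ θ : A →ₗ[K] Matrix (Fin n) (Fin n) K, IsDApprox K (S : Set A) d n θ →
      (∀ a b : A, θ (a * b) = θ a * θ b) ∧ (θ 1 = 1) ∧ (∀ a : A, a ≠ 0 → IsUnit (θ a)) := by
    intro θ hθ
    obtain ⟨⟨U, hUdim, hUmul⟩, hrk⟩ := hθ
    have hUn : Module.finrank K ↥U = n := by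
      have hle : Module.finrank K ↥U ≤ n := by
        have := Submodule.finrank_le U
        rwa [Module.finrank_fin_fun] at this
      have hge : n ≤ Module.finrank K ↥U := by
        by_contra hcon
        push_neg at hcon
        have h1 : (Module.finrank K ↥U : ℝ) ≤ (n : ℝ) - 1 := by
          have h2 : Module.finrank K ↥U + 1 ≤ n := hcon
          have h3 := (Nat.cast_le (α := ℝ)).2 h2
          push_cast at h3; linarith
        have hexp : ((1 : ℝ) - 1 / d) * n = n - n / d := by ring
        have h3 : (n : ℝ) / d < 1 := by
          rw [div_lt_one hd0]; exact_mod_cast hdn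
        have hn1 : (1 : ℝ) ≤ n := by exact_mod_cast hn
        rw [hexp] at hUdim
        linarith
      omega
    have hUtop : U = ⊤ :=
      Submodule.eq_top_of_finrank_eq (by rw [hUn, Module.finrank_fin_fun])
    have hmul : ∀ a b : A, θ (a * b) = θ a * θ b := by
      intro a b
      apply Matrix.toLin'.injective
      apply LinearMap.ext
      intro v
      have hv : v ∈ U := by rw [hUtop]; exact Submodule.mem_top
      have h4 := hUmul a (hmem a) b (hmem b) v hv
      simp only [Matrix.toLin'_apply]
      rw [h4, Matrix.mulVec_mulVec]
    have hunit : ∀ a : A, a ≠ 0 → IsUnit (θ a) := by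
      intro a ha
      apply Matrix.isUnit_of_rank_eq'
      have h1 := hrk a (hmem a) ha
      unfold nrk at h1
      have hn0 : (0 : ℝ) < n := by exact_mod_cast hn
      have hle : (θ a).rank ≤ n := by
        have := Matrix.rank_le_card_width (θ a)
        simpa using this
      have hge : n ≤ (θ a).rank := by
        by_contra hcon
        push_neg at hcon
        have h2 : ((θ a).rank : ℝ) ≤ (n : ℝ) - 1 := by
          have h2' : (θ a).rank + 1 ≤ n := hcon
          have h3 := (Nat.cast_le (α := ℝ)).2 h2'
          push_cast at h3; linarith
        have h4 := (le_div_iff₀ hn0).1 h1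
        have hexp : ((1 : ℝ) - 1 / d) * n = n - n / d := by ring
        rw [hexp] at h4
        have h5 : (n : ℝ) / d < 1 := by
          rw [div_lt_one hd0]; exact_mod_cast hdn
        linarith
      omega
    have hone : θ 1 = 1 := by
      have h1 : θ 1 * θ 1 = θ 1 * 1 := by rw [← hmul, one_mul, mul_one]
      exact (hunit 1 one_ne_zero).mul_left_cancel h1
    exact ⟨hmul, hone, hunit⟩
  obtain ⟨hmulφ, honeφ, hunitφ⟩ := main φ hφ
  obtain ⟨hmulψ, honeψ, hunitψ⟩ := main ψ hψ
  refine ⟨hmulφ, hmulψ, ?_⟩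
  haveI : NoZeroDivisors A := ⟨fun {a b} h => hnzd a b h⟩
  haveI : IsDomain A := NoZeroDivisors.to_isDomain A
  letI : DivisionRing A := divisionRingOfFiniteDimensional K A
  let Φ : A →ₐ[K] Matrix (Fin n) (Fin n) K := AlgHom.ofLinearMap φ honeφ hmulφ
  let Ψ : A →ₐ[K] Matrix (Fin n) (Fin n) K := AlgHom.ofLinearMap ψ honeψ hmulψ
  haveI : Module.Finite A (RepSpace Φ) := Module.Finite.of_restrictScalars_finite K A (RepSpace Φ)
  haveI : Module.Finite A (RepSpace Ψ) := Module.Finite.of_restrictScalars_finite K A (RepSpace Ψ)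
  have hfr : Module.finrank A (RepSpace Φ) = Module.finrank A (RepSpace Ψ) := by
    have hA0 : 0 < Module.finrank K A := Module.finrank_pos
    have h1 : Module.finrank K A * Module.finrank A (RepSpace Φ) = n := by
      rw [Module.finrank_mul_finrank]
      exact Module.finrank_fin_fun K
    have h2 : Module.finrank K A * Module.finrank A (RepSpace Ψ) = n := by
      rw [Module.finrank_mul_finrank]
      exact Module.finrank_fin_fun K
    exact Nat.eq_of_mul_eq_mul_left hA0 (by rw [h1, h2])
  obtain ⟨e⟩ := FiniteDimensional.nonempty_linearEquiv_of_finrank_eq hfr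
  let f : (Fin n → K) →ₗ[K] (Fin n → K) :=
    { toFun := fun v => e (show RepSpace Φ from v)
      map_add' := fun v w => e.map_add v w
      map_smul' := fun c v => by
        show e ((c • v : RepSpace Φ)) = c • (e v)
        have hw : ∀ w : RepSpace Φ, e (c • w) = c • e w := fun w => by
          rw [← algebraMap_smul A c w, map_smul, algebraMap_smul]
        exact hw v }
  let g : (Fin n → K) →ₗ[K] (Fin n → K) :=
    { toFun := fun v => e.symm (show RepSpace Ψ from v)
      map_add' := fun v w => e.symm.map_add v w
      map_smul' := fun c v => by
        show e.symm ((c • v : RepSpace Ψ)) = c • (e.symm v)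
        have hw : ∀ w : RepSpace Ψ, e.symm (c • w) = c • e.symm w := fun w => by
          rw [← algebraMap_smul A c w, map_smul, algebraMap_smul]
        exact hw v }
  let M' : Matrix (Fin n) (Fin n) K := LinearMap.toMatrix' f
  let N : Matrix (Fin n) (Fin n) K := LinearMap.toMatrix' g
  have hfg : f ∘ₗ g = LinearMap.id := by
    apply LinearMap.ext; intro v; exact e.apply_symm_apply v
  have hgf : g ∘ₗ f = LinearMap.id := by
    apply LinearMap.ext; intro v; exact e.symm_apply_apply v
  have hMN : M' * N = 1 := by
    rw [show M' * N = LinearMap.toMatrix' (f ∘ₗ g) from (LinearMap.toMatrix'_comp f g).symm, hfg,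
      LinearMap.toMatrix'_id]
  have hNM : N * M' = 1 := by
    rw [show N * M' = LinearMap.toMatrix' (g ∘ₗ f) from (LinearMap.toMatrix'_comp g f).symm, hgf,
      LinearMap.toMatrix'_id]
  have hM' : ∀ w : Fin n → K, M'.mulVec w = f w := fun w => by
    rw [← Matrix.toLin'_apply, Matrix.toLin'_toMatrix']
  have key : ∀ a : A, M' * φ a = ψ a * M' := by
    intro a
    apply Matrix.toLin'.injective
    apply LinearMap.ext
    intro v
    simp only [Matrix.toLin'_apply]
    rw [← Matrix.mulVec_mulVec, ← Matrix.mulVec_mulVec, hM', hM']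
    calc f ((φ a).mulVec v) = (show Fin n → K from e (a • (show RepSpace Φ from v))) := rfl
      _ = (ψ a).mulVec (f v) := map_smul e a _
  refine ⟨⟨M', N, hMN, hNM⟩, fun a => ?_⟩
  show M' * φ a * N = ψ a
  rw [key a, mul_assoc, hMN, mul_one]
end
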